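/- There exist a finite set Z with |Z| = 4 and a second-order Markov transition matrix Q on Z (Q : Z^2 × Z → ℝ, nonnegative, rows summing to 1) such that: (i) Q is regular, i.e., there exists n ≥ 1 such that for all w ∈ Z^2 and all z ∈ Z, Σ_{w' ∈ Z^2 with second coordinate z} (((P_Q)^n)(w, w')) > 0, where P_Q is the Doob lift of Q on Z^2; and yet (ii) Q admits two distinct invariant distributions on Z^2; in particular, P_Q has more than one recurrent class. -/

import Mathlib

open Finset
open scoped Classical

noncomputable section

/-- The first `k` coordinates of a length-`k+1` tuple. -/
def front {Z : Type*} {k : ℕ} (v : Fin (k + 1) → Z) : Fin k → Z :=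
  fun i => v i.castSucc

/-- The last `k` coordinates of a length-`k+1` tuple. -/
def back {Z : Type*} {k : ℕ} (v : Fin (k + 1) → Z) : Fin k → Z :=
  fun i => v i.succ

/-- `p` is a probability distribution on the finite type `α`. -/
def IsProbDist {α : Type*} [Fintype α] (p : α → ℝ) : Prop :=
  (∀ a, 0 ≤ p a) ∧ ∑ a, p a = 1

/-- `Q` is a `k`-th order Markov transition matrix on `Z`. -/
def IsTransMat {Z : Type*} [Fintype Z] {k : ℕ} (Q : (Fin k → Z) → Z → ℝ) : Prop :=
  (∀ w z, 0 ≤ Q w z) ∧ ∀ w, ∑ z, Q w z = 1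

/-- `μ` is an invariant (probability) distribution for the `k`-th order transition matrix `Q`:
`μ(z₁,…,z_k) = ∑_{z₀} μ(z₀,…,z_{k-1}) Q((z₀,…,z_{k-1}), z_k)`. -/
def IsInvariantFor {Z : Type*} [Fintype Z] {k : ℕ} (μ : (Fin k → Z) → ℝ)
    (Q : (Fin k → Z) → Z → ℝ) : Prop :=
  IsProbDist μ ∧
    ∀ w : Fin k → Z,
      μ w = ∑ z0 : Z,
        μ (front (Fin.cons z0 w)) *
          Q (front (Fin.cons z0 w)) ((Fin.cons z0 w : Fin (k + 1) → Z) (Fin.last k))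

/-- `P` is a (first-order) stochastic matrix. -/
def IsStochastic {S : Type*} [Fintype S] (P : Matrix S S ℝ) : Prop :=
  (∀ i j, 0 ≤ P i j) ∧ ∀ i, ∑ j, P i j = 1

/-- State `j` is accessible from state `i` under the stochastic matrix `P`. -/
def Accessible {S : Type*} [Fintype S] (P : Matrix S S ℝ) (i j : S) : Prop :=
  ∃ n : ℕ, 1 ≤ n ∧ 0 < (P ^ n) i j

/-- State `i` is recurrent for the stochastic matrix `P`. -/
def Recurrent {S : Type*} [Fintype S] (P : Matrix S S ℝ) (i : S) : Prop :=
  ∀ j, Accessible P i j → Accessible P j i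

/-- `P` has a single recurrent class. -/
def SingleRecurrentClass {S : Type*} [Fintype S] (P : Matrix S S ℝ) : Prop :=
  (∃ i, Recurrent P i) ∧ ∀ i j, Recurrent P i → Recurrent P j → Accessible P i j

/-- The Doob lift of a `k`-th order transition matrix `Q` on `Z` to a first-order
stochastic matrix on `Z^k`. -/
def doobLift {Z : Type*} {k : ℕ} (Q : (Fin k → Z) → Z → ℝ) (hk : 0 < k) :
    Matrix (Fin k → Z) (Fin k → Z) ℝ :=
  Matrix.of fun w w' =>
    if ∀ (i : Fin k) (h : (i : ℕ) + 1 < k), w' i = w ⟨(i : ℕ) + 1, h⟩ then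
      Q w (w' ⟨k - 1, Nat.sub_lt hk Nat.one_pos⟩)
    else 0

/-- The distribution of a length-`m` block of the process `g(X)`, where `X` is a
stationary Markov chain with transition matrix `P` and (initial) invariant
distribution `π`:
`p_m(y₁,…,y_m) = ∑_{x₁ ∈ g⁻¹(y₁),…,x_m ∈ g⁻¹(y_m)} π(x₁) ∏_{ℓ=2}^m P(x_{ℓ-1}, x_ℓ)`. -/
def wordDist {X Y : Type*} [Fintype X] (P : Matrix X X ℝ) (π : X → ℝ) (g : X → Y)
    {m : ℕ} (y : Fin m → Y) : ℝ :=
  ∑ x : Fin m → X,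
    if ∀ i, g (x i) = y i then
      ∏ i : Fin m,
        if (i : ℕ) = 0 then π (x i)
        else P (x ⟨(i : ℕ) - 1, lt_of_le_of_lt (Nat.sub_le _ _) i.isLt⟩) (x i)
    else 0

/- ===== Auxiliary development for the example ===== -/

section Aux

/-- `A`-edges: the cycle `0→1→2→3→0` together with the loop at `0`. -/
def inA (a b : Fin 4) : Prop :=
  (a = 0 ∧ b = 0) ∨ (a = 0 ∧ b = 1) ∨ (a = 1 ∧ b = 2) ∨ (a = 2 ∧ b = 3) ∨ (a = 3 ∧ b = 0)

/-- `B`-edges: the cycle `1→0→3→2→1` together with the loop at `1`. -/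
def inB (a b : Fin 4) : Prop :=
  (a = 1 ∧ b = 1) ∨ (a = 1 ∧ b = 0) ∨ (a = 0 ∧ b = 3) ∨ (a = 3 ∧ b = 2) ∨ (a = 2 ∧ b = 1)

instance : ∀ a b, Decidable (inA a b) := by unfold inA; infer_instance
instance : ∀ a b, Decidable (inB a b) := by unfold inB; infer_instance

/-- The transition table `tbl a b c = Q((a,b), c)`. -/
def tbl : Fin 4 → Fin 4 → Fin 4 → ℝ :=
![![![1/2,1/2,0,0], ![0,0,1,0], ![1/4,1/4,1/4,1/4], ![0,0,1,0]],
  ![![0,0,0,1], ![1/2,1/2,0,0], ![0,0,0,1], ![1/4,1/4,1/4,1/4]],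
  ![![1/4,1/4,1/4,1/4], ![1/2,1/2,0,0], ![1/4,1/4,1/4,1/4], ![1,0,0,0]],
  ![![1/2,1/2,0,0], ![1/4,1/4,1/4,1/4], ![0,1,0,0], ![1/4,1/4,1/4,1/4]]]

lemma tbl_nonneg : ∀ a b c, 0 ≤ tbl a b c := by
  intro a b c; fin_cases a <;> fin_cases b <;> fin_cases c <;> norm_num [tbl]

lemma tbl_row : ∀ a b, ∑ c, tbl a b c = 1 := by
  intro a b; fin_cases a <;> fin_cases b <;> norm_num [tbl, Fin.sum_univ_four, Matrix.cons_val_two, Matrix.cons_val_three, Matrix.vecHead, Matrix.vecTail]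

lemma tblA_zero : ∀ a b c, inA a b → ¬ inA b c → tbl a b c = 0 := by
  intro a b c hab hbc
  fin_cases a <;> fin_cases b <;> fin_cases c <;> simp_all [inA, tbl]

lemma tblB_zero : ∀ a b c, inB a b → ¬ inB b c → tbl a b c = 0 := by
  intro a b c hab hbc
  fin_cases a <;> fin_cases b <;> fin_cases c <;> simp_all [inA, inB, tbl]

def Qex : (Fin 2 → Fin 4) → Fin 4 → ℝ := fun w z => tbl (w 0) (w 1) z

def Pex : Matrix (Fin 2 → Fin 4) (Fin 2 → Fin 4) ℝ := doobLift Qex Nat.zero_lt_two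

lemma Pex_apply (w w' : Fin 2 → Fin 4) :
    Pex w w' = if w' 0 = w 1 then tbl (w 0) (w 1) (w' 1) else 0 := by
  have hiff : (∀ (i : Fin 2) (h : (i : ℕ) + 1 < 2), w' i = w ⟨(i : ℕ) + 1, h⟩) ↔ w' 0 = w 1 := by
    constructor
    · intro h; exact h 0 (by norm_num)
    · intro h i hi
      have hv : (i : ℕ) = 0 := by omega
      have : i = 0 := Fin.ext hv
      subst this
      exact h
  rw [Pex, doobLift, Matrix.of_apply]
  simp only [hiff]
  rfl

lemma Pex_eta (w : Fin 2 → Fin 4) : w = ![w 0, w 1] := by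
  funext i; fin_cases i <;> simp

lemma Pex_nonneg : ∀ i j, 0 ≤ Pex i j := by
  intro i j; rw [Pex_apply]; split_ifs
  · exact tbl_nonneg _ _ _
  · exact le_refl 0

/- general matrix lemmas -/
section MatrixLemmas
variable {S : Type*} [Fintype S] [DecidableEq S] (P : Matrix S S ℝ)

lemma pow_entry_nonneg (hP : ∀ i j, 0 ≤ P i j) : ∀ n i j, 0 ≤ (P ^ n) i j := by
  intro n
  induction n with
  | zero => intro i j; simp [Matrix.one_apply]; split_ifs <;> norm_num
  | succ n ih =>
      intro i j
      rw [pow_succ, Matrix.mul_apply]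
      exact Finset.sum_nonneg fun k _ => mul_nonneg (ih i k) (hP k j)

lemma pow_mul_pos (hP : ∀ i j, 0 ≤ P i j) {m n : ℕ} {i j k : S}
    (h1 : 0 < (P ^ m) i j) (h2 : 0 < (P ^ n) j k) : 0 < (P ^ (m + n)) i k := by
  rw [pow_add, Matrix.mul_apply]
  refine Finset.sum_pos' (fun l _ => mul_nonneg (pow_entry_nonneg P hP m i l)
    (pow_entry_nonneg P hP n l k)) ⟨j, Finset.mem_univ j, mul_pos h1 h2⟩

lemma closed_pow (S' : Set S) (h : ∀ i ∈ S', ∀ j ∉ S', P i j = 0) :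
    ∀ n, ∀ i ∈ S', ∀ j ∉ S', (P ^ n) i j = 0 := by
  intro n
  induction n with
  | zero =>
      intro i hi j hj
      have : i ≠ j := fun hij => hj (hij ▸ hi)
      simp [Matrix.one_apply, this]
  | succ n ih =>
      intro i hi j hj
      rw [pow_succ, Matrix.mul_apply]
      refine Finset.sum_eq_zero fun k _ => ?_
      by_cases hk : k ∈ S'
      · rw [h k hk j hj, mul_zero]
      · rw [ih i hi k hk, zero_mul]
end MatrixLemmas

lemma step_pos {a b c : Fin 4} (h : 0 < tbl a b c) :
    0 < Pex ![a, b] ![b, c] := by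
  rw [Pex_apply]
  simpa using h

lemma one_step {a b c : Fin 4} (h : 0 < tbl a b c) :
    0 < (Pex ^ 1) ![a, b] ![b, c] := by
  rw [pow_one]; exact step_pos h

lemma ext_step {m : ℕ} {i : Fin 2 → Fin 4} {a b c : Fin 4}
    (h1 : 0 < (Pex ^ m) i ![a, b]) (h2 : 0 < tbl a b c) :
    0 < (Pex ^ (m + 1)) i ![b, c] :=
  pow_mul_pos Pex Pex_nonneg h1 (one_step h2)

/- loops -/
lemma loop00 : ∀ n : ℕ, 0 < (Pex ^ (n + 1)) ![0, 0] ![0, 0] := by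
  intro n
  induction n with
  | zero => exact one_step (by norm_num [tbl, Matrix.cons_val_two, Matrix.cons_val_three, Matrix.vecHead, Matrix.vecTail])
  | succ n ih => exact ext_step ih (by norm_num [tbl, Matrix.cons_val_two, Matrix.cons_val_three, Matrix.vecHead, Matrix.vecTail])

lemma loop11 : ∀ n : ℕ, 0 < (Pex ^ (n + 1)) ![1, 1] ![1, 1] := by
  intro n
  induction n with
  | zero => exact one_step (by norm_num [tbl, Matrix.cons_val_two, Matrix.cons_val_three, Matrix.vecHead, Matrix.vecTail])
  | succ n ih => exact ext_step ih (by norm_num [tbl, Matrix.cons_val_two, Matrix.cons_val_three, Matrix.vecHead, Matrix.vecTail])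

/- from the loop states, every letter is reachable at any time ≥ 5 -/
lemma reach00 (n : ℕ) (hn : 5 ≤ n) (z : Fin 4) :
    ∃ w' : Fin 2 → Fin 4, w' 1 = z ∧ 0 < (Pex ^ n) ![0, 0] w' := by
  fin_cases z
  · refine ⟨![0, 0], by simp, ?_⟩
    have h := loop00 (n - 1)
    have e : n - 1 + 1 = n := by omega
    rwa [e] at h
  · refine ⟨![0, 1], by simp, ?_⟩
    have h := ext_step (loop00 (n - 2)) (show (0:ℝ) < tbl 0 0 1 by norm_num [tbl, Matrix.cons_val_two, Matrix.cons_val_three, Matrix.vecHead, Matrix.vecTail])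
    have e : n - 2 + 1 + 1 = n := by omega
    rwa [e] at h
  · refine ⟨![1, 2], by simp, ?_⟩
    have h := ext_step (ext_step (loop00 (n - 3))
      (show (0:ℝ) < tbl 0 0 1 by norm_num [tbl, Matrix.cons_val_two, Matrix.cons_val_three, Matrix.vecHead, Matrix.vecTail]))
      (show (0:ℝ) < tbl 0 1 2 by norm_num [tbl, Matrix.cons_val_two, Matrix.cons_val_three, Matrix.vecHead, Matrix.vecTail])
    have e : n - 3 + 1 + 1 + 1 = n := by omega
    rwa [e] at h
  · refine ⟨![2, 3], by simp, ?_⟩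
    have h := ext_step (ext_step (ext_step (loop00 (n - 4))
      (show (0:ℝ) < tbl 0 0 1 by norm_num [tbl, Matrix.cons_val_two, Matrix.cons_val_three, Matrix.vecHead, Matrix.vecTail]))
      (show (0:ℝ) < tbl 0 1 2 by norm_num [tbl, Matrix.cons_val_two, Matrix.cons_val_three, Matrix.vecHead, Matrix.vecTail]))
      (show (0:ℝ) < tbl 1 2 3 by norm_num [tbl, Matrix.cons_val_two, Matrix.cons_val_three, Matrix.vecHead, Matrix.vecTail])
    have e : n - 4 + 1 + 1 + 1 + 1 = n := by omega
    rwa [e] at h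

lemma reach11 (n : ℕ) (hn : 5 ≤ n) (z : Fin 4) :
    ∃ w' : Fin 2 → Fin 4, w' 1 = z ∧ 0 < (Pex ^ n) ![1, 1] w' := by
  fin_cases z
  · refine ⟨![1, 0], by simp, ?_⟩
    have h := ext_step (loop11 (n - 2)) (show (0:ℝ) < tbl 1 1 0 by norm_num [tbl, Matrix.cons_val_two, Matrix.cons_val_three, Matrix.vecHead, Matrix.vecTail])
    have e : n - 2 + 1 + 1 = n := by omega
    rwa [e] at h
  · refine ⟨![1, 1], by simp, ?_⟩
    have h := loop11 (n - 1)
    have e : n - 1 + 1 = n := by omega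
    rwa [e] at h
  · refine ⟨![3, 2], by simp, ?_⟩
    have h := ext_step (ext_step (ext_step (loop11 (n - 4))
      (show (0:ℝ) < tbl 1 1 0 by norm_num [tbl, Matrix.cons_val_two, Matrix.cons_val_three, Matrix.vecHead, Matrix.vecTail]))
      (show (0:ℝ) < tbl 1 0 3 by norm_num [tbl, Matrix.cons_val_two, Matrix.cons_val_three, Matrix.vecHead, Matrix.vecTail]))
      (show (0:ℝ) < tbl 0 3 2 by norm_num [tbl, Matrix.cons_val_two, Matrix.cons_val_three, Matrix.vecHead, Matrix.vecTail])
    have e : n - 4 + 1 + 1 + 1 + 1 = n := by omega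
    rwa [e] at h
  · refine ⟨![0, 3], by simp, ?_⟩
    have h := ext_step (ext_step (loop11 (n - 3))
      (show (0:ℝ) < tbl 1 1 0 by norm_num [tbl, Matrix.cons_val_two, Matrix.cons_val_three, Matrix.vecHead, Matrix.vecTail]))
      (show (0:ℝ) < tbl 1 0 3 by norm_num [tbl, Matrix.cons_val_two, Matrix.cons_val_three, Matrix.vecHead, Matrix.vecTail])
    have e : n - 3 + 1 + 1 + 1 = n := by omega
    rwa [e] at h

end Aux
section Aux2

/- explicit paths back to the loop states -/
lemma pA01 : 0 < (Pex ^ 4) ![0, 1] ![0, 0] :=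
  ext_step (ext_step (ext_step (one_step (show (0:ℝ) < tbl 0 1 2 by norm_num [tbl, Matrix.cons_val_two, Matrix.cons_val_three, Matrix.vecHead, Matrix.vecTail]))
    (show (0:ℝ) < tbl 1 2 3 by norm_num [tbl, Matrix.cons_val_two, Matrix.cons_val_three, Matrix.vecHead, Matrix.vecTail]))
    (show (0:ℝ) < tbl 2 3 0 by norm_num [tbl, Matrix.cons_val_two, Matrix.cons_val_three, Matrix.vecHead, Matrix.vecTail]))
    (show (0:ℝ) < tbl 3 0 0 by norm_num [tbl, Matrix.cons_val_two, Matrix.cons_val_three, Matrix.vecHead, Matrix.vecTail])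

lemma pA12 : 0 < (Pex ^ 3) ![1, 2] ![0, 0] :=
  ext_step (ext_step (one_step (show (0:ℝ) < tbl 1 2 3 by norm_num [tbl, Matrix.cons_val_two, Matrix.cons_val_three, Matrix.vecHead, Matrix.vecTail]))
    (show (0:ℝ) < tbl 2 3 0 by norm_num [tbl, Matrix.cons_val_two, Matrix.cons_val_three, Matrix.vecHead, Matrix.vecTail]))
    (show (0:ℝ) < tbl 3 0 0 by norm_num [tbl, Matrix.cons_val_two, Matrix.cons_val_three, Matrix.vecHead, Matrix.vecTail])

lemma pA23 : 0 < (Pex ^ 2) ![2, 3] ![0, 0] :=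
  ext_step (one_step (show (0:ℝ) < tbl 2 3 0 by norm_num [tbl, Matrix.cons_val_two, Matrix.cons_val_three, Matrix.vecHead, Matrix.vecTail]))
    (show (0:ℝ) < tbl 3 0 0 by norm_num [tbl, Matrix.cons_val_two, Matrix.cons_val_three, Matrix.vecHead, Matrix.vecTail])

lemma pA30 : 0 < (Pex ^ 1) ![3, 0] ![0, 0] :=
  one_step (show (0:ℝ) < tbl 3 0 0 by norm_num [tbl, Matrix.cons_val_two, Matrix.cons_val_three, Matrix.vecHead, Matrix.vecTail])

lemma pA00 : 0 < (Pex ^ 1) ![0, 0] ![0, 0] :=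
  one_step (show (0:ℝ) < tbl 0 0 0 by norm_num [tbl, Matrix.cons_val_two, Matrix.cons_val_three, Matrix.vecHead, Matrix.vecTail])

lemma pB10 : 0 < (Pex ^ 4) ![1, 0] ![1, 1] :=
  ext_step (ext_step (ext_step (one_step (show (0:ℝ) < tbl 1 0 3 by norm_num [tbl, Matrix.cons_val_two, Matrix.cons_val_three, Matrix.vecHead, Matrix.vecTail]))
    (show (0:ℝ) < tbl 0 3 2 by norm_num [tbl, Matrix.cons_val_two, Matrix.cons_val_three, Matrix.vecHead, Matrix.vecTail]))
    (show (0:ℝ) < tbl 3 2 1 by norm_num [tbl, Matrix.cons_val_two, Matrix.cons_val_three, Matrix.vecHead, Matrix.vecTail]))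
    (show (0:ℝ) < tbl 2 1 1 by norm_num [tbl, Matrix.cons_val_two, Matrix.cons_val_three, Matrix.vecHead, Matrix.vecTail])

lemma pB03 : 0 < (Pex ^ 3) ![0, 3] ![1, 1] :=
  ext_step (ext_step (one_step (show (0:ℝ) < tbl 0 3 2 by norm_num [tbl, Matrix.cons_val_two, Matrix.cons_val_three, Matrix.vecHead, Matrix.vecTail]))
    (show (0:ℝ) < tbl 3 2 1 by norm_num [tbl, Matrix.cons_val_two, Matrix.cons_val_three, Matrix.vecHead, Matrix.vecTail]))
    (show (0:ℝ) < tbl 2 1 1 by norm_num [tbl, Matrix.cons_val_two, Matrix.cons_val_three, Matrix.vecHead, Matrix.vecTail])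

lemma pB32 : 0 < (Pex ^ 2) ![3, 2] ![1, 1] :=
  ext_step (one_step (show (0:ℝ) < tbl 3 2 1 by norm_num [tbl, Matrix.cons_val_two, Matrix.cons_val_three, Matrix.vecHead, Matrix.vecTail]))
    (show (0:ℝ) < tbl 2 1 1 by norm_num [tbl, Matrix.cons_val_two, Matrix.cons_val_three, Matrix.vecHead, Matrix.vecTail])

lemma pB21 : 0 < (Pex ^ 1) ![2, 1] ![1, 1] :=
  one_step (show (0:ℝ) < tbl 2 1 1 by norm_num [tbl, Matrix.cons_val_two, Matrix.cons_val_three, Matrix.vecHead, Matrix.vecTail])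

lemma pB11 : 0 < (Pex ^ 1) ![1, 1] ![1, 1] :=
  one_step (show (0:ℝ) < tbl 1 1 0 by norm_num [tbl, Matrix.cons_val_two, Matrix.cons_val_three, Matrix.vecHead, Matrix.vecTail])

lemma pB11' : 0 < (Pex ^ 1) ![1, 1] ![1, 1] :=
  one_step (show (0:ℝ) < tbl 1 1 1 by norm_num [tbl, Matrix.cons_val_two, Matrix.cons_val_three, Matrix.vecHead, Matrix.vecTail])

/- transient states reach a loop state -/
lemma pT02 : 0 < (Pex ^ 3) ![0, 2] ![0, 0] :=
  ext_step (ext_step (one_step (show (0:ℝ) < tbl 0 2 3 by norm_num [tbl, Matrix.cons_val_two, Matrix.cons_val_three, Matrix.vecHead, Matrix.vecTail]))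
    (show (0:ℝ) < tbl 2 3 0 by norm_num [tbl, Matrix.cons_val_two, Matrix.cons_val_three, Matrix.vecHead, Matrix.vecTail]))
    (show (0:ℝ) < tbl 3 0 0 by norm_num [tbl, Matrix.cons_val_two, Matrix.cons_val_three, Matrix.vecHead, Matrix.vecTail])

lemma pT13 : 0 < (Pex ^ 2) ![1, 3] ![0, 0] :=
  ext_step (one_step (show (0:ℝ) < tbl 1 3 0 by norm_num [tbl, Matrix.cons_val_two, Matrix.cons_val_three, Matrix.vecHead, Matrix.vecTail]))
    (show (0:ℝ) < tbl 3 0 0 by norm_num [tbl, Matrix.cons_val_two, Matrix.cons_val_three, Matrix.vecHead, Matrix.vecTail])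

lemma pT20 : 0 < (Pex ^ 1) ![2, 0] ![0, 0] :=
  one_step (show (0:ℝ) < tbl 2 0 0 by norm_num [tbl, Matrix.cons_val_two, Matrix.cons_val_three, Matrix.vecHead, Matrix.vecTail])

lemma pT22 : 0 < (Pex ^ 3) ![2, 2] ![0, 0] :=
  ext_step (ext_step (one_step (show (0:ℝ) < tbl 2 2 3 by norm_num [tbl, Matrix.cons_val_two, Matrix.cons_val_three, Matrix.vecHead, Matrix.vecTail]))
    (show (0:ℝ) < tbl 2 3 0 by norm_num [tbl, Matrix.cons_val_two, Matrix.cons_val_three, Matrix.vecHead, Matrix.vecTail]))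
    (show (0:ℝ) < tbl 3 0 0 by norm_num [tbl, Matrix.cons_val_two, Matrix.cons_val_three, Matrix.vecHead, Matrix.vecTail])

lemma pT31 : 0 < (Pex ^ 4) ![3, 1] ![0, 0] :=
  ext_step (ext_step (ext_step (one_step (show (0:ℝ) < tbl 3 1 2 by norm_num [tbl, Matrix.cons_val_two, Matrix.cons_val_three, Matrix.vecHead, Matrix.vecTail]))
    (show (0:ℝ) < tbl 1 2 3 by norm_num [tbl, Matrix.cons_val_two, Matrix.cons_val_three, Matrix.vecHead, Matrix.vecTail]))
    (show (0:ℝ) < tbl 2 3 0 by norm_num [tbl, Matrix.cons_val_two, Matrix.cons_val_three, Matrix.vecHead, Matrix.vecTail]))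
    (show (0:ℝ) < tbl 3 0 0 by norm_num [tbl, Matrix.cons_val_two, Matrix.cons_val_three, Matrix.vecHead, Matrix.vecTail])

lemma pT33 : 0 < (Pex ^ 2) ![3, 3] ![0, 0] :=
  ext_step (one_step (show (0:ℝ) < tbl 3 3 0 by norm_num [tbl, Matrix.cons_val_two, Matrix.cons_val_three, Matrix.vecHead, Matrix.vecTail]))
    (show (0:ℝ) < tbl 3 0 0 by norm_num [tbl, Matrix.cons_val_two, Matrix.cons_val_three, Matrix.vecHead, Matrix.vecTail])

lemma to_core (w : Fin 2 → Fin 4) :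
    ∃ m : ℕ, 1 ≤ m ∧ m ≤ 6 ∧
      (0 < (Pex ^ m) w ![0, 0] ∨ 0 < (Pex ^ m) w ![1, 1]) := by
  obtain ⟨a, b, rfl⟩ : ∃ a b, w = ![a, b] := ⟨w 0, w 1, Pex_eta w⟩
  fin_cases a <;> fin_cases b
  · exact ⟨1, by norm_num, by norm_num, Or.inl pA00⟩
  · exact ⟨4, by norm_num, by norm_num, Or.inl pA01⟩
  · exact ⟨3, by norm_num, by norm_num, Or.inl pT02⟩
  · exact ⟨3, by norm_num, by norm_num, Or.inr pB03⟩
  · exact ⟨4, by norm_num, by norm_num, Or.inr pB10⟩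
  · exact ⟨1, by norm_num, by norm_num, Or.inr pB11⟩
  · exact ⟨3, by norm_num, by norm_num, Or.inl pA12⟩
  · exact ⟨2, by norm_num, by norm_num, Or.inl pT13⟩
  · exact ⟨1, by norm_num, by norm_num, Or.inl pT20⟩
  · exact ⟨1, by norm_num, by norm_num, Or.inr pB21⟩
  · exact ⟨3, by norm_num, by norm_num, Or.inl pT22⟩
  · exact ⟨2, by norm_num, by norm_num, Or.inl pA23⟩
  · exact ⟨1, by norm_num, by norm_num, Or.inl pA30⟩
  · exact ⟨4, by norm_num, by norm_num, Or.inl pT31⟩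
  · exact ⟨2, by norm_num, by norm_num, Or.inr pB32⟩
  · exact ⟨2, by norm_num, by norm_num, Or.inl pT33⟩

lemma regular_eleven (w : Fin 2 → Fin 4) (z : Fin 4) :
    0 < ∑ w' : Fin 2 → Fin 4, (if w' 1 = z then (Pex ^ 11) w w' else 0) := by
  obtain ⟨m, hm1, hm6, hcase⟩ := to_core w
  have h5 : 5 ≤ 11 - m := by omega
  have key : ∃ w' : Fin 2 → Fin 4, w' 1 = z ∧ 0 < (Pex ^ 11) w w' := by
    rcases hcase with h | h
    · obtain ⟨w', hz, hp⟩ := reach00 (11 - m) h5 z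
      refine ⟨w', hz, ?_⟩
      have h2 := pow_mul_pos Pex Pex_nonneg h hp
      rwa [show m + (11 - m) = 11 by omega] at h2
    · obtain ⟨w', hz, hp⟩ := reach11 (11 - m) h5 z
      refine ⟨w', hz, ?_⟩
      have h2 := pow_mul_pos Pex Pex_nonneg h hp
      rwa [show m + (11 - m) = 11 by omega] at h2
  obtain ⟨w', hz, hp⟩ := key
  refine Finset.sum_pos' (fun u _ => ?_) ⟨w', Finset.mem_univ w', ?_⟩
  · split_ifs
    · exact pow_entry_nonneg Pex Pex_nonneg 11 w u
    · exact le_refl 0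
  · rw [if_pos hz]; exact hp

end Aux2
section Aux3

lemma Pex_closedA (v u : Fin 2 → Fin 4) (hv : inA (v 0) (v 1))
    (hu : ¬ inA (u 0) (u 1)) : Pex v u = 0 := by
  rw [Pex_apply]
  split_ifs with h
  · exact tblA_zero _ _ _ hv (by rwa [h] at hu)
  · rfl

lemma Pex_closedB (v u : Fin 2 → Fin 4) (hv : inB (v 0) (v 1))
    (hu : ¬ inB (u 0) (u 1)) : Pex v u = 0 := by
  rw [Pex_apply]
  split_ifs with h
  · exact tblB_zero _ _ _ hv (by rwa [h] at hu)
  · rfl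

lemma accA {j : Fin 2 → Fin 4} (h : Accessible Pex ![0, 0] j) : inA (j 0) (j 1) := by
  by_contra hj
  obtain ⟨n, hn, hp⟩ := h
  have h0 : (![0, 0] : Fin 2 → Fin 4) ∈ {v : Fin 2 → Fin 4 | inA (v 0) (v 1)} := by
    simp [Set.mem_setOf_eq, inA]
  have hz := closed_pow Pex {v : Fin 2 → Fin 4 | inA (v 0) (v 1)}
    (fun i hi u hu => Pex_closedA i u hi hu) n _ h0 j hj
  exact absurd (show _ = (0:ℝ) by convert hz) (ne_of_gt hp)

lemma accB {j : Fin 2 → Fin 4} (h : Accessible Pex ![1, 1] j) : inB (j 0) (j 1) := by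
  by_contra hj
  obtain ⟨n, hn, hp⟩ := h
  have h0 : (![1, 1] : Fin 2 → Fin 4) ∈ {v : Fin 2 → Fin 4 | inB (v 0) (v 1)} := by
    simp [Set.mem_setOf_eq, inB]
  have hz := closed_pow Pex {v : Fin 2 → Fin 4 | inB (v 0) (v 1)}
    (fun i hi u hu => Pex_closedB i u hi hu) n _ h0 j hj
  exact absurd (show _ = (0:ℝ) by convert hz) (ne_of_gt hp)

lemma recurrent00 : Recurrent Pex ![0, 0] := by
  intro j hj
  have hA := accA hj
  obtain ⟨a, b, rfl⟩ : ∃ a b, j = ![a, b] := ⟨j 0, j 1, Pex_eta j⟩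
  simp only [Matrix.cons_val_zero, Matrix.cons_val_one, Matrix.head_cons] at hA
  rcases hA with ⟨rfl, rfl⟩ | ⟨rfl, rfl⟩ | ⟨rfl, rfl⟩ | ⟨rfl, rfl⟩ | ⟨rfl, rfl⟩
  · exact ⟨1, le_refl 1, by convert pA00⟩
  · exact ⟨4, by norm_num, by convert pA01⟩
  · exact ⟨3, by norm_num, by convert pA12⟩
  · exact ⟨2, by norm_num, by convert pA23⟩
  · exact ⟨1, le_refl 1, by convert pA30⟩

lemma recurrent11 : Recurrent Pex ![1, 1] := by
  intro j hj
  have hB := accB hj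
  obtain ⟨a, b, rfl⟩ : ∃ a b, j = ![a, b] := ⟨j 0, j 1, Pex_eta j⟩
  simp only [Matrix.cons_val_zero, Matrix.cons_val_one, Matrix.head_cons] at hB
  rcases hB with ⟨rfl, rfl⟩ | ⟨rfl, rfl⟩ | ⟨rfl, rfl⟩ | ⟨rfl, rfl⟩ | ⟨rfl, rfl⟩
  · exact ⟨1, le_refl 1, by convert pB11⟩
  · exact ⟨4, by norm_num, by convert pB10⟩
  · exact ⟨3, by norm_num, by convert pB03⟩
  · exact ⟨2, by norm_num, by convert pB32⟩
  · exact ⟨1, le_refl 1, by convert pB21⟩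

lemma not_acc : ¬ Accessible Pex ![0, 0] ![1, 1] := by
  intro h
  have := accA h
  simp [inA] at this

end Aux3
section Aux4

def mA (a b : Fin 4) : ℝ := if inA a b then 1/5 else 0
def mB (a b : Fin 4) : ℝ := if inB a b then 1/5 else 0

def muA : (Fin 2 → Fin 4) → ℝ := fun v => mA (v 0) (v 1)
def muB : (Fin 2 → Fin 4) → ℝ := fun v => mB (v 0) (v 1)

lemma front_cons0 (z0 : Fin 4) (w : Fin 2 → Fin 4) : front (Fin.cons z0 w) 0 = z0 := rfl
lemma front_cons1 (z0 : Fin 4) (w : Fin 2 → Fin 4) : front (Fin.cons z0 w) 1 = w 0 := rfl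
lemma cons_last2 (z0 : Fin 4) (w : Fin 2 → Fin 4) :
    (Fin.cons z0 w : Fin 3 → Fin 4) (Fin.last 2) = w 1 := rfl

lemma sum_fun_eq (g : Fin 4 → Fin 4 → ℝ) :
    ∑ v : Fin 2 → Fin 4, g (v 0) (v 1) = ∑ a : Fin 4, ∑ b : Fin 4, g a b := by
  have h1 : ∑ v : Fin 2 → Fin 4, g (v 0) (v 1) = ∑ p : Fin 4 × Fin 4, g p.1 p.2 :=
    Fintype.sum_equiv (piFinTwoEquiv (fun _ => Fin 4)) _ _ (fun v => rfl)
  rw [h1, Fintype.sum_prod_type]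

lemma sum_muA : ∑ v : Fin 2 → Fin 4, muA v = 1 := by
  rw [show (fun v : Fin 2 → Fin 4 => muA v) = fun v => mA (v 0) (v 1) from rfl]
  rw [sum_fun_eq mA]
  simp (config := { decide := true }) only [mA, inA, Fin.sum_univ_four, if_true, if_false]
  norm_num

lemma sum_muB : ∑ v : Fin 2 → Fin 4, muB v = 1 := by
  rw [show (fun v : Fin 2 → Fin 4 => muB v) = fun v => mB (v 0) (v 1) from rfl]
  rw [sum_fun_eq mB]
  simp (config := { decide := true }) only [mB, inB, Fin.sum_univ_four, if_true, if_false]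
  norm_num

lemma keyA : ∀ a b : Fin 4, mA a b = ∑ z0 : Fin 4, mA z0 a * tbl z0 a b := by
  intro a b
  fin_cases a <;> fin_cases b <;>
    simp (config := { decide := true }) only [mA, inA, tbl, Fin.sum_univ_four] <;>
    norm_num [tbl, Matrix.cons_val_two, Matrix.cons_val_three, Matrix.vecHead, Matrix.vecTail]

lemma keyB : ∀ a b : Fin 4, mB a b = ∑ z0 : Fin 4, mB z0 a * tbl z0 a b := by
  intro a b
  fin_cases a <;> fin_cases b <;>
    simp (config := { decide := true }) only [mB, inB, tbl, Fin.sum_univ_four] <;>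
    norm_num [tbl, Matrix.cons_val_two, Matrix.cons_val_three, Matrix.vecHead, Matrix.vecTail]

lemma invA : IsInvariantFor muA Qex := by
  refine ⟨⟨fun v => ?_, sum_muA⟩, fun w => ?_⟩
  · unfold muA mA; split_ifs <;> norm_num
  · simp only [muA, Qex, front_cons0, front_cons1, cons_last2]
    exact keyA (w 0) (w 1)

lemma invB : IsInvariantFor muB Qex := by
  refine ⟨⟨fun v => ?_, sum_muB⟩, fun w => ?_⟩
  · unfold muB mB; split_ifs <;> norm_num
  · simp only [muB, Qex, front_cons0, front_cons1, cons_last2]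
    exact keyB (w 0) (w 1)

lemma muA_ne_muB : muA ≠ muB := by
  intro h
  have h' := congrFun h ![0, 0]
  simp (config := { decide := true }) [muA, muB, mA, mB, inA, inB] at h'

end Aux4


/-- Example 1. There is a regular second-order Markov transition matrix
`Q` on a four-element alphabet whose Doob lift nevertheless has more than one recurrent
class; in particular `Q` admits two distinct invariant distributions on `Z^2`. -/
theorem regular_second_order_chain_without_unique_invariant :
    ∃ Q : (Fin 2 → Fin 4) → Fin 4 → ℝ, IsTransMat Q ∧
      (∃ n : ℕ, 1 ≤ n ∧ ∀ (w : Fin 2 → Fin 4) (z : Fin 4),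
        0 < ∑ w' : Fin 2 → Fin 4,
          (if w' 1 = z then ((doobLift Q Nat.zero_lt_two) ^ n) w w' else 0)) ∧
      (∃ μ₁ μ₂ : (Fin 2 → Fin 4) → ℝ, μ₁ ≠ μ₂ ∧
        IsInvariantFor μ₁ Q ∧ IsInvariantFor μ₂ Q) ∧
      ∃ w w' : Fin 2 → Fin 4, Recurrent (doobLift Q Nat.zero_lt_two) w ∧
        Recurrent (doobLift Q Nat.zero_lt_two) w' ∧
        ¬ Accessible (doobLift Q Nat.zero_lt_two) w w' := by
  refine ⟨Qex, ⟨fun w z => tbl_nonneg _ _ _, fun w => tbl_row _ _⟩,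
    ⟨11, by norm_num, fun w z => ?_⟩,
    ⟨muA, muB, muA_ne_muB, invA, invB⟩,
    ![0, 0], ![1, 1], recurrent00, recurrent11, not_acc⟩
  exact regular_eleven w z
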